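/- Let θ0 be a real number, let D ⊆ ℝ with θ0 ∉ D, and let α, β : ℝ → ℝ be functions such that α(θ) ≠ α(θ0) for all θ ∈ D and such that the map θ ↦ (β(θ) − β(θ0))/(α(θ) − α(θ0)) is strictly monotone increasing on D. Let g₁, …, g_T be real numbers and for 0 ≤ τ < T set γ̄_{τ:T} = (1/(T−τ)) · Σ_{t=τ+1}^{T} g_t, and for 0 ≤ τ_i < τ_j set γ̄_{τ_i:τ_j} = (1/(τ_j−τ_i)) · Σ_{t=τ_i+1}^{τ_j} g_t. Suppose 0 ≤ τ_i < τ_j < T and θ₁^{τ_i}, θ₁^{τ_j} ∈ D satisfy the root equations [α(θ₁^{τ}) − α(θ0)] · Σ_{t=τ+1}^{T} g_t − [β(θ₁^{τ}) − β(θ0)] · (T − τ) = 0 for τ = τ_i and τ = τ_j respectively. Then the sign of γ̄_{τ_i:τ_j} − γ̄_{τ_j:T} equals the sign of θ₁^{τ_i} − θ₁^{τ_j}; in particular θ₁^{τ_i} > θ₁^{τ_j} if and only if γ̄_{τ_i:τ_j} > γ̄_{τ_j:T}, θ₁^{τ_i} = θ₁^{τ_j} if and only if γ̄_{τ_i:τ_j}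 = γ̄_{τ_j:T}, and θ₁^{τ_i} < θ₁^{τ_j} if and only if γ̄_{τ_i:τ_j} < γ̄_{τ_j:T}. -/

import Mathlib

open Finset

theorem focus_prop1_sign_of_roots
    (θ0 : ℝ) (D : Set ℝ) (hθ0 : θ0 ∉ D)
    (α β : ℝ → ℝ)
    (hα : ∀ θ ∈ D, α θ ≠ α θ0)
    (hmono : StrictMonoOn (fun θ => (β θ - β θ0) / (α θ - α θ0)) D)
    (T : ℕ) (g : ℕ → ℝ)
    (τi τj : ℕ) (hij : τi < τj) (hjT : τj < T)
    (θi θj : ℝ) (hθi : θi ∈ D) (hθj : θj ∈ D)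
    (hrooti : (α θi - α θ0) * (∑ t ∈ Finset.Ioc τi T, g t)
        - (β θi - β θ0) * ((T : ℝ) - τi) = 0)
    (hrootj : (α θj - α θ0) * (∑ t ∈ Finset.Ioc τj T, g t)
        - (β θj - β θ0) * ((T : ℝ) - τj) = 0) :
    ((∑ t ∈ Finset.Ioc τi τj, g t) / ((τj : ℝ) - τi)
        > (∑ t ∈ Finset.Ioc τj T, g t) / ((T : ℝ) - τj) ↔ θi > θj) ∧
    ((∑ t ∈ Finset.Ioc τi τj, g t) / ((τj : ℝ) - τi)
        = (∑ t ∈ Finset.Ioc τj T, g t) / ((T : ℝ) - τj) ↔ θi = θj) ∧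
    ((∑ t ∈ Finset.Ioc τi τj, g t) / ((τj : ℝ) - τi)
        < (∑ t ∈ Finset.Ioc τj T, g t) / ((T : ℝ) - τj) ↔ θi < θj) := by
  set Si := ∑ t ∈ Finset.Ioc τi τj, g t with hSi
  set Sj := ∑ t ∈ Finset.Ioc τj T, g t with hSj
  have hsplit : Si + Sj = ∑ t ∈ Finset.Ioc τi T, g t :=
    Finset.sum_Ioc_consecutive g hij.le hjT.le
  have ha : (0:ℝ) < (τj:ℝ) - τi := by
    have := (Nat.cast_lt (α := ℝ)).mpr hij; linarith
  have hb : (0:ℝ) < (T:ℝ) - τj := by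
    have := (Nat.cast_lt (α := ℝ)).mpr hjT; linarith
  have hc : (0:ℝ) < (T:ℝ) - τi := by linarith
  have hnei : α θi - α θ0 ≠ 0 := sub_ne_zero.mpr (hα θi hθi)
  have hnej : α θj - α θ0 ≠ 0 := sub_ne_zero.mpr (hα θj hθj)
  rw [← hsplit] at hrooti
  have hfi : (β θi - β θ0) / (α θi - α θ0) = (Si + Sj) / ((T:ℝ) - τi) := by
    rw [div_eq_div_iff hnei (ne_of_gt hc)]; linarith
  have hfj : (β θj - β θ0) / (α θj - α θ0) = Sj / ((T:ℝ) - τj) := by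
    rw [div_eq_div_iff hnej (ne_of_gt hb)]; linarith
  have hcab : (T:ℝ) - τi = ((τj:ℝ) - τi) + ((T:ℝ) - τj) := by ring
  have k1 : Si / ((τj:ℝ) - τi) > Sj / ((T:ℝ) - τj) ↔
      (Si + Sj) / ((T:ℝ) - τi) > Sj / ((T:ℝ) - τj) := by
    rw [gt_iff_lt, gt_iff_lt, div_lt_div_iff₀ hb ha, div_lt_div_iff₀ hb hc, hcab]
    constructor <;> intro h <;> linarith [h]
  have k2 : Si / ((τj:ℝ) - τi) = Sj / ((T:ℝ) - τj) ↔
      (Si + Sj) / ((T:ℝ) - τi) = Sj / ((T:ℝ) - τj) := by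
    rw [div_eq_div_iff (ne_of_gt ha) (ne_of_gt hb),
        div_eq_div_iff (ne_of_gt hc) (ne_of_gt hb), hcab]
    constructor <;> intro h <;> linarith [h]
  have k3 : Si / ((τj:ℝ) - τi) < Sj / ((T:ℝ) - τj) ↔
      (Si + Sj) / ((T:ℝ) - τi) < Sj / ((T:ℝ) - τj) := by
    rw [div_lt_div_iff₀ ha hb, div_lt_div_iff₀ hc hb, hcab]
    constructor <;> intro h <;> linarith [h]
  have hlt : θj < θi ↔ (β θj - β θ0) / (α θj - α θ0) < (β θi - β θ0) / (α θi - α θ0) :=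
    (hmono.lt_iff_lt hθj hθi).symm
  have hlt' : θi < θj ↔ (β θi - β θ0) / (α θi - α θ0) < (β θj - β θ0) / (α θj - α θ0) :=
    (hmono.lt_iff_lt hθi hθj).symm
  have heq : θi = θj ↔ (β θi - β θ0) / (α θi - α θ0) = (β θj - β θ0) / (α θj - α θ0) := by
    constructor
    · intro h; rw [h]
    · intro h; exact hmono.injOn hθi hθj h
  refine ⟨?_, ?_, ?_⟩
  · rw [k1, gt_iff_lt, gt_iff_lt, ← hfi, ← hfj, ← hlt]
  · rw [k2, ← hfi, ← hfj, ← heq]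
  · rw [k3, ← hfi, ← hfj, ← hlt']
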